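/- (Uniform averaging) Under the assumptions of the averaging lemma with δ_k = 1/(k+1), the uniform average x̂_k = (1/k)∑_{i=1}^k x_i satisfies F(x̂_k) - F* + α T_k ≤ (α/k)(T_0 + ∑_{t=1}^k β_t/Γ_t), where Γ_t = 1/(t+1). -/

import Mathlib

theorem stmt12 {p : ℕ} (F : EuclideanSpace ℝ (Fin p) → ℝ) (Fstar : ℝ)
    (hF : ConvexOn ℝ Set.univ F) (hFstar : ∀ x, Fstar ≤ F x)
    (x : ℕ → EuclideanSpace ℝ (Fin p)) (T β δ : ℕ → ℝ) (α : ℝ) (hα : 0 < α)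
    (hT : ∀ k, 0 ≤ T k) (hβ : ∀ k ≥ 1, 0 ≤ β k)
    (hδdef : ∀ k : ℕ, δ k = 1 / ((k : ℝ) + 1))
    (hrec : ∀ k ≥ 1, δ k / α * (F (x k) - Fstar) + T k ≤ (1 - δ k) * T (k - 1) + β k)
    (k : ℕ) (hk : 1 ≤ k) :
    F ((1 / (k : ℝ)) • ∑ i ∈ Finset.Icc 1 k, x i) - Fstar + α * T k ≤
      α / (k : ℝ) * (T 0 + ∑ t ∈ Finset.Icc 1 k, β t / (1 / ((t : ℝ) + 1))) := by
  have hαne : α ≠ 0 := ne_of_gt hα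
  have step : ∀ m : ℕ, 1 ≤ m → (1/α) * (F (x m) - Fstar) + ((m:ℝ)+1) * T m
      ≤ (m:ℝ) * T (m-1) + ((m:ℝ)+1) * β m := by
    intro m hm
    have h := hrec m hm
    rw [hδdef] at h
    have hc : (0:ℝ) < (m:ℝ)+1 := by positivity
    calc (1/α) * (F (x m) - Fstar) + ((m:ℝ)+1) * T m
        = ((m:ℝ)+1) * (1/((m:ℝ)+1)/α * (F (x m) - Fstar) + T m) := by
          field_simp
      _ ≤ ((m:ℝ)+1) * ((1 - 1/((m:ℝ)+1)) * T (m-1) + β m) :=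
          mul_le_mul_of_nonneg_left h hc.le
      _ = (m:ℝ) * T (m-1) + ((m:ℝ)+1) * β m := by field_simp; ring
  have key : ∀ n, 1 ≤ n → (1/α) * ∑ i ∈ Finset.Icc 1 n, (F (x i) - Fstar)
      + ((n:ℝ)+1) * T n ≤ T 0 + ∑ t ∈ Finset.Icc 1 n, ((t:ℝ)+1) * β t := by
    intro n hn
    induction n, hn using Nat.le_induction with
    | base =>
      have h := step 1 le_rfl
      norm_num at h ⊢
      linarith
    | succ n hn ih =>
      have h := step (n+1) (by omega)
      simp only [Nat.add_sub_cancel] at h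
      push_cast at h
      rw [Finset.sum_Icc_succ_top (by omega : 1 ≤ n+1),
          Finset.sum_Icc_succ_top (by omega : 1 ≤ n+1), mul_add]
      push_cast
      linarith
  have hkR : (0:ℝ) < (k:ℝ) := by exact_mod_cast hk
  have hkne : (k:ℝ) ≠ 0 := ne_of_gt hkR
  have hw : ∑ i ∈ Finset.Icc 1 k, (1/(k:ℝ)) = 1 := by
    rw [Finset.sum_const, Nat.card_Icc, Nat.add_sub_cancel, nsmul_eq_mul]
    field_simp
  have jensen : F ((1 / (k : ℝ)) • ∑ i ∈ Finset.Icc 1 k, x i)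
      ≤ ∑ i ∈ Finset.Icc 1 k, (1/(k:ℝ)) * F (x i) := by
    have := hF.map_sum_le (t := Finset.Icc 1 k) (w := fun _ => (1/(k:ℝ)))
      (p := fun i => x i) (fun i _ => by positivity) hw (fun i _ => Set.mem_univ _)
    rwa [← Finset.smul_sum] at this
  have hsum : ∑ i ∈ Finset.Icc 1 k, (1/(k:ℝ)) * F (x i)
      = (1/(k:ℝ)) * ∑ i ∈ Finset.Icc 1 k, F (x i) := by
    rw [Finset.mul_sum]
  have hβeq : ∑ t ∈ Finset.Icc 1 k, β t / (1 / ((t : ℝ) + 1))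
      = ∑ t ∈ Finset.Icc 1 k, ((t:ℝ)+1) * β t := by
    refine Finset.sum_congr rfl fun t _ => ?_
    have ht : ((t:ℝ)+1) ≠ 0 := by positivity
    field_simp
  rw [hβeq]
  have hk' := key k hk
  have hsplit : ∑ i ∈ Finset.Icc 1 k, (F (x i) - Fstar)
      = (∑ i ∈ Finset.Icc 1 k, F (x i)) - (k:ℝ) * Fstar := by
    rw [Finset.sum_sub_distrib, Finset.sum_const, Nat.card_Icc, Nat.add_sub_cancel,
        nsmul_eq_mul]
  rw [hsplit] at hk'
  set S := ∑ i ∈ Finset.Icc 1 k, F (x i) with hS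
  set Sβ := ∑ t ∈ Finset.Icc 1 k, ((t:ℝ)+1) * β t with hSβ
  have hstep : S - (k:ℝ)*Fstar + α*((k:ℝ)+1)*T k ≤ α*(T 0 + Sβ) := by
    calc S - (k:ℝ)*Fstar + α*((k:ℝ)+1)*T k
        = α * ((1/α) * (S - (k:ℝ)*Fstar) + ((k:ℝ)+1)*T k) := by field_simp
      _ ≤ α * (T 0 + Sβ) := mul_le_mul_of_nonneg_left hk' hα.le
  have hineq := mul_le_mul_of_nonneg_left hstep (one_div_pos.mpr hkR).le
  have expand : (1/(k:ℝ)) * (S - (k:ℝ)*Fstar + α*((k:ℝ)+1)*T k)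
      = (1/(k:ℝ))*S - Fstar + α*T k + α*(1/(k:ℝ))*T k := by field_simp; ring
  have expand2 : (1/(k:ℝ)) * (α*(T 0 + Sβ)) = α/(k:ℝ) * (T 0 + Sβ) := by ring
  rw [expand, expand2] at hineq
  have hpos : 0 ≤ α*(1/(k:ℝ))*T k := mul_nonneg (mul_nonneg hα.le (one_div_pos.mpr hkR).le) (hT k)
  have hj : F ((1 / (k : ℝ)) • ∑ i ∈ Finset.Icc 1 k, x i) ≤ (1/(k:ℝ))*S := by
    rw [← hsum] at *; exact jensen
  linarith
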